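/- arXiv:1511.05631 — 3 statements merged into one kernel-verified Lean document; each statement's English description precedes it below -/
import Mathlib

section
/- Let E be a sublinear expectation on the space X of bounded measurable real-valued functions on (Ω, F). For every ξ ∈ X, the set { L(ξ) : L is a linear functional on X dominated by E } equals the closed interval [−E(−ξ), E(ξ)]. -/
open MeasureTheory Set Filter Topology Classical

/-- The space of bounded measurable real-valued functions on `Ω`, as a submodule of `Ω → ℝ`. -/
def BM (Ω : Type*) [MeasurableSpace Ω] : Submodule ℝ (Ω → ℝ) where
  carrier := {f | Measurable f ∧ ∃ M : ℝ, ∀ ω, |f ω| ≤ M}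
  zero_mem' := ⟨measurable_const, 0, by simp⟩
  add_mem' := by
    rintro f g ⟨hf, Mf, hMf⟩ ⟨hg, Mg, hMg⟩
    exact ⟨hf.add hg, Mf + Mg, fun ω => (abs_add_le _ _).trans (add_le_add (hMf ω) (hMg ω))⟩
  smul_mem' := by
    rintro c f ⟨hf, Mf, hMf⟩
    refine ⟨hf.const_smul c, |c| * Mf, fun ω => ?_⟩
    simp only [Pi.smul_apply, smul_eq_mul, abs_mul]
    exact mul_le_mul_of_nonneg_left (hMf ω) (abs_nonneg c)

variable {Ω : Type*} [MeasurableSpace Ω]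

lemma mem_BM {f : Ω → ℝ} (hf : Measurable f) (M : ℝ) (hM : ∀ ω, |f ω| ≤ M) : f ∈ BM Ω :=
  ⟨hf, M, hM⟩

lemma BM.measurable (ξ : BM Ω) : Measurable (ξ : Ω → ℝ) := ξ.2.1

lemma BM.bounded (ξ : BM Ω) : ∃ M : ℝ, ∀ ω, |(ξ : Ω → ℝ) ω| ≤ M := ξ.2.2

/-- A sublinear expectation on the space of bounded measurable functions. -/
structure SLE (Ω : Type*) [MeasurableSpace Ω] where
  E : BM Ω → ℝ
  mono : ∀ ξ η : BM Ω, (∀ ω, (η : Ω → ℝ) ω ≤ (ξ : Ω → ℝ) ω) → E η ≤ E ξ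
  const_preserve : ∀ (c : ℝ) (h : (fun _ : Ω => c) ∈ BM Ω), E ⟨fun _ => c, h⟩ = c
  subadd : ∀ ξ η : BM Ω, E (ξ + η) ≤ E ξ + E η
  pos_homog : ∀ (c : ℝ), 0 ≤ c → ∀ ξ : BM Ω, E (c • ξ) = c * E ξ

/-- The constant function as an element of `BM Ω`. -/
def constBM (Ω : Type*) [MeasurableSpace Ω] (c : ℝ) : BM Ω :=
  ⟨fun _ => c, mem_BM measurable_const |c| fun _ => le_refl _⟩

/-- The indicator function of a measurable set as an element of `BM Ω`. -/
noncomputable def indBM {Ω : Type*} [MeasurableSpace Ω] (A : Set Ω) (hA : MeasurableSet A) : BM Ω :=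
  ⟨A.indicator fun _ => 1,
    mem_BM (measurable_const.indicator hA) 1 fun ω => by
      by_cases h : ω ∈ A <;> simp [Set.indicator_apply, h]⟩

/-- The product of two bounded measurable functions. -/
noncomputable def mulBM (ξ η : BM Ω) : BM Ω := by
  refine ⟨fun ω => (ξ : Ω → ℝ) ω * (η : Ω → ℝ) ω, ?_⟩
  obtain ⟨Mf, hMf⟩ := BM.bounded ξ
  obtain ⟨Mg, hMg⟩ := BM.bounded η
  refine mem_BM ((BM.measurable ξ).mul (BM.measurable η)) (max Mf 0 * max Mg 0) fun ω => ?_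
  rw [abs_mul]
  exact mul_le_mul ((hMf ω).trans (le_max_left _ _)) ((hMg ω).trans (le_max_left _ _))
    (abs_nonneg _) (le_max_right _ _)

/-- The upper capacity associated to a sublinear expectation: `C(A) = E(1_A)` for measurable `A`
(junk value `0` on non-measurable sets). -/
noncomputable def SLE.cap (𝔼 : SLE Ω) (A : Set Ω) : ℝ :=
  if h : MeasurableSet A then 𝔼.E (indBM A h) else 0

/-- The lower capacity associated to a sublinear expectation: `c(A) = -E(-1_A)` for measurable `A`
(junk value `0` on non-measurable sets). -/
noncomputable def SLE.lcap (𝔼 : SLE Ω) (A : Set Ω) : ℝ :=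
  if h : MeasurableSet A then -𝔼.E (-(indBM A h)) else 0

/-- A linear expectation dominated by the sublinear expectation `𝔼`. -/
def Dominated (𝔼 : SLE Ω) (L : BM Ω →ₗ[ℝ] ℝ) : Prop := ∀ ξ : BM Ω, L ξ ≤ 𝔼.E ξ

/-- `ξ` and `η` are uncorrelated with respect to `𝔼` if `L(ξη) = L(ξ)L(η)` for every
linear expectation `L` dominated by `𝔼`. -/
def Uncorrelated (𝔼 : SLE Ω) (ξ η : BM Ω) : Prop :=
  ∀ L : BM Ω →ₗ[ℝ] ℝ, Dominated 𝔼 L → L (mulBM ξ η) = L ξ * L η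

/-- `𝔼` is regular: if `ξ n ↓ 0` pointwise then `𝔼.E (ξ n) ↓ 0`. -/
def SLE.Regular (𝔼 : SLE Ω) : Prop :=
  ∀ ξ : ℕ → BM Ω, (∀ ω, Antitone fun n => (ξ n : Ω → ℝ) ω) →
    (∀ ω, Tendsto (fun n => (ξ n : Ω → ℝ) ω) atTop (𝓝 0)) →
    Tendsto (fun n => 𝔼.E (ξ n)) atTop (𝓝 0)

/-- The σ-field generated by `ξ a, …, ξ b`. -/
def sigmaGen (ξ : ℕ → BM Ω) (a b : ℕ) : MeasurableSpace Ω :=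
  ⨆ i ∈ Set.Icc a b, MeasurableSpace.comap (fun ω => (ξ i : Ω → ℝ) ω) inferInstance

/-- `{ξ_n}_{n ≥ 1}` is an independent sequence under `𝔼`: pairwise uncorrelated, and
`C(A ∩ B) ≤ C(A) C(B)` whenever `A ∈ σ(ξ_1, …, ξ_m)` and `B ∈ σ(ξ_{m+1}, …, ξ_n)`, `m < n`. -/
def IndepSeq (𝔼 : SLE Ω) (ξ : ℕ → BM Ω) : Prop :=
  (∀ i j, 1 ≤ i → 1 ≤ j → i ≠ j → Uncorrelated 𝔼 (ξ i) (ξ j)) ∧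
  ∀ m n : ℕ, 1 ≤ m → m < n → ∀ A B : Set Ω,
    MeasurableSet[sigmaGen ξ 1 m] A → MeasurableSet[sigmaGen ξ (m + 1) n] B →
    𝔼.cap (A ∩ B) ≤ 𝔼.cap A * 𝔼.cap B

/-- Assumption (H₀): for every disjoint measurable cover `{A_n}` of `Ω`,
the series `Σ C(A_n)` has bounded partial sums. -/
def H0 (𝔼 : SLE Ω) : Prop :=
  ∀ A : ℕ → Set Ω, (∀ n, MeasurableSet (A n)) → Pairwise (Function.onFun Disjoint A) →
    (⋃ n, A n) = Set.univ → ∃ M : ℝ, ∀ N : ℕ, ∑ n ∈ Finset.range N, 𝔼.cap (A n) < M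

private lemma exists_dominating_lin (X : Type*) [AddCommGroup X] [Module ℝ X] (N : X → ℝ)
    (N_hom : ∀ c : ℝ, 0 ≤ c → ∀ x, N (c • x) = c * N x)
    (N_add : ∀ x y, N (x + y) ≤ N x + N y) (N0 : N 0 = 0)
    (ξ : X) (x : ℝ) (hx : x ∈ Set.Icc (-N (-ξ)) (N ξ)) :
    ∃ L : X →ₗ[ℝ] ℝ, (∀ η, L η ≤ N η) ∧ L ξ = x := by
  by_cases hξ : ξ = 0
  · subst hξ
    have hx0 : x = 0 := by
      simp only [neg_zero, N0] at hx
      exact le_antisymm hx.2 hx.1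
    obtain ⟨L, _, hL2⟩ := exists_extension_of_le_sublinear (⊥ : X →ₗ.[ℝ] ℝ) N
      (fun c hc => N_hom c hc.le) N_add (by
        rintro ⟨y, hy⟩
        obtain rfl : y = 0 := (Submodule.mem_bot ℝ).1 hy
        show (⊥ : X →ₗ.[ℝ] ℝ) ⟨0, hy⟩ ≤ N 0
        rw [N0]
        exact le_of_eq (LinearPMap.map_zero _))
    exact ⟨L, hL2, by simp [hx0]⟩
  · have H : ∀ c : ℝ, c • ξ = 0 → c • x = 0 := by
      intro c hc
      rcases smul_eq_zero.1 hc with h | h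
      · simp [h]
      · exact absurd h hξ
    set f := LinearPMap.mkSpanSingleton' (σ := RingHom.id ℝ) ξ x H
    have hf : ∀ y : f.domain, f y ≤ N y := by
      rintro ⟨y, hy⟩
      rw [LinearPMap.domain_mkSpanSingleton, Submodule.mem_span_singleton] at hy
      obtain ⟨c, rfl⟩ := hy
      rw [LinearPMap.mkSpanSingleton'_apply]
      show c • x ≤ N (c • ξ)
      rcases le_or_gt 0 c with hc | hc
      · rw [N_hom c hc]
        exact mul_le_mul_of_nonneg_left hx.2 hc |>.trans_eq' (by ring_nf)
      · have : c • ξ = (-c) • (-ξ) := by simp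
        rw [this, N_hom (-c) (by linarith)]
        have := mul_le_mul_of_nonneg_left hx.1 (by linarith : (0:ℝ) ≤ -c)
        simp only [smul_eq_mul]
        nlinarith
    obtain ⟨L, hL1, hL2⟩ := exists_extension_of_le_sublinear f N
      (fun c hc => N_hom c hc.le) N_add hf
    refine ⟨L, hL2, ?_⟩
    have hmem : ξ ∈ f.domain := by
      rw [LinearPMap.domain_mkSpanSingleton]; exact Submodule.mem_span_singleton_self ξ
    have := hL1 ⟨ξ, hmem⟩
    rwa [LinearPMap.mkSpanSingleton'_apply_self] at this

/-- The set of values `L ξ`, over linear expectations `L` dominated by `𝔼`,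
is exactly the closed interval `[-𝔼.E (-ξ), 𝔼.E ξ]`. -/
theorem dominated_values_eq_Icc (𝔼 : SLE Ω) (ξ : BM Ω) :
    {x : ℝ | ∃ L : BM Ω →ₗ[ℝ] ℝ, Dominated 𝔼 L ∧ L ξ = x} =
      Set.Icc (-𝔼.E (-ξ)) (𝔼.E ξ) := by
  ext x
  simp only [Set.mem_setOf_eq, Set.mem_Icc]
  constructor
  · rintro ⟨L, hL, rfl⟩
    refine ⟨?_, hL ξ⟩
    have h := hL (-ξ)
    rw [map_neg] at h
    linarith
  · intro hx
    have N0 : 𝔼.E 0 = 0 := by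
      have h := 𝔼.pos_homog 0 le_rfl 0
      rw [zero_smul] at h
      linarith
    obtain ⟨L, hL1, hL2⟩ := exists_dominating_lin (BM Ω) 𝔼.E 𝔼.pos_homog
      (fun a b => 𝔼.subadd a b) N0 ξ x hx
    exact ⟨L, hL1, hL2⟩
end

section
/- Let E be a sublinear expectation on the space X of bounded measurable real-valued functions on (Ω, F). If ξ, η ∈ X are uncorrelated with respect to E, then there exists a constant λ̂ ∈ [−E(−ξ), E(ξ)] such that E((ξ − λ̂)η) = 0. -/
open MeasureTheory Set Filter Topology Classical

variable {Ω : Type*} [MeasurableSpace Ω]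

lemma SLE.E_zero (𝔼 : SLE Ω) : 𝔼.E 0 = 0 := by
  have h := 𝔼.pos_homog 0 le_rfl 0
  simpa using h

/-- Hahn–Banach: every `X` admits a dominated linear expectation attaining `𝔼.E X`. -/
lemma exists_dominated_eq (𝔼 : SLE Ω) (X : BM Ω) :
    ∃ L : BM Ω →ₗ[ℝ] ℝ, Dominated 𝔼 L ∧ L X = 𝔼.E X := by
  have N_hom : ∀ c : ℝ, 0 < c → ∀ x : BM Ω, 𝔼.E (c • x) = c * 𝔼.E x :=
    fun c hc x => 𝔼.pos_homog c hc.le x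
  have hEneg : ∀ x : BM Ω, -𝔼.E x ≤ 𝔼.E (-x) := by
    intro x
    have h := 𝔼.subadd x (-x)
    rw [add_neg_cancel, 𝔼.E_zero] at h
    linarith
  by_cases hX : X = 0
  · -- extend the zero functional from the trivial subspace
    obtain ⟨g, _, hg2⟩ := exists_extension_of_le_sublinear
      (⟨⊥, 0⟩ : BM Ω →ₗ.[ℝ] ℝ) 𝔼.E N_hom 𝔼.subadd (by
        rintro ⟨x, hx⟩
        have : x = 0 := by simpa using hx
        simp [this, 𝔼.E_zero])
    exact ⟨g, hg2, by rw [hX, map_zero, 𝔼.E_zero]⟩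
  · obtain ⟨g, hg1, hg2⟩ := exists_extension_of_le_sublinear
      (LinearPMap.mkSpanSingleton X (𝔼.E X) hX) 𝔼.E N_hom 𝔼.subadd (by
        rintro ⟨x, hx⟩
        obtain ⟨c, rfl⟩ := Submodule.mem_span_singleton.mp hx
        rw [LinearPMap.mkSpanSingleton'_apply]
        rcases lt_trichotomy c 0 with hc | hc | hc
        · have h1 : c • X = (-c) • (-X) := by rw [smul_neg, neg_smul, neg_neg]
          show c • 𝔼.E X ≤ 𝔼.E (c • X)
          rw [h1, 𝔼.pos_homog (-c) (by linarith) (-X)]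
          have := hEneg X
          simp only [smul_eq_mul]
          nlinarith
        · simp [hc, 𝔼.E_zero]
        · rw [𝔼.pos_homog c hc.le X]; simp)
    refine ⟨g, hg2, ?_⟩
    have := hg1 ⟨X, Submodule.mem_span_singleton_self X⟩
    rw [this, LinearPMap.mkSpanSingleton_apply]

/-- For any two dominated linear expectations, `(L ξ - L' ξ)(L η - L' η) = 0` when
`ξ, η` are uncorrelated. -/
lemma pairwise_product_zero (𝔼 : SLE Ω) {ξ η : BM Ω} (h : Uncorrelated 𝔼 ξ η)
    {L L' : BM Ω →ₗ[ℝ] ℝ} (hL : Dominated 𝔼 L) (hL' : Dominated 𝔼 L') :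
    (L ξ - L' ξ) * (L η - L' η) = 0 := by
  set M : BM Ω →ₗ[ℝ] ℝ := (1/2 : ℝ) • L + (1/2 : ℝ) • L' with hM
  have hMdom : Dominated 𝔼 M := by
    intro x
    have h1 := hL x
    have h2 := hL' x
    simp only [hM, LinearMap.add_apply, LinearMap.smul_apply, smul_eq_mul]
    linarith
  have e1 := h L hL
  have e2 := h L' hL'
  have e3 := h M hMdom
  simp only [hM, LinearMap.add_apply, LinearMap.smul_apply, smul_eq_mul] at e3
  nlinarith [e1, e2, e3]

lemma mulBM_sub_const (ξ η : BM Ω) (lam : ℝ) :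
    mulBM (ξ - constBM Ω lam) η = mulBM ξ η - lam • η := by
  apply Subtype.ext
  funext ω
  show ((ξ : Ω → ℝ) ω - lam) * (η : Ω → ℝ) ω
      = (ξ : Ω → ℝ) ω * (η : Ω → ℝ) ω - lam * (η : Ω → ℝ) ω
  ring

lemma dominated_mul_eval (𝔼 : SLE Ω) {ξ η : BM Ω} (h : Uncorrelated 𝔼 ξ η)
    {L : BM Ω →ₗ[ℝ] ℝ} (hL : Dominated 𝔼 L) (lam : ℝ) :
    L (mulBM (ξ - constBM Ω lam) η) = (L ξ - lam) * L η := by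
  rw [mulBM_sub_const, map_sub, LinearMap.map_smul, h L hL]
  simp [smul_eq_mul]; ring

/-- Key criterion for the centering constant. -/
lemma key_criterion (𝔼 : SLE Ω) {ξ η : BM Ω} (h : Uncorrelated 𝔼 ξ η) (lam : ℝ)
    (H1 : ∀ L : BM Ω →ₗ[ℝ] ℝ, Dominated 𝔼 L → (L ξ - lam) * L η ≤ 0)
    (H2 : ∃ L0 : BM Ω →ₗ[ℝ] ℝ, Dominated 𝔼 L0 ∧ L0 ξ = lam) :
    𝔼.E (mulBM (ξ - constBM Ω lam) η) = 0 := by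
  obtain ⟨Ls, hLs, hLsval⟩ := exists_dominated_eq 𝔼 (mulBM (ξ - constBM Ω lam) η)
  obtain ⟨L0, hL0, hL0val⟩ := H2
  have hub : 𝔼.E (mulBM (ξ - constBM Ω lam) η) ≤ 0 := by
    rw [← hLsval, dominated_mul_eval 𝔼 h hLs lam]
    exact H1 Ls hLs
  have hlb : (0:ℝ) ≤ 𝔼.E (mulBM (ξ - constBM Ω lam) η) := by
    have := hL0 (mulBM (ξ - constBM Ω lam) η)
    rw [dominated_mul_eval 𝔼 h hL0 lam, hL0val, sub_self, zero_mul] at this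
    exact this
  linarith

/-- If `ξ` and `η` are uncorrelated w.r.t. `𝔼`, there is a constant
`λ̂ ∈ [-𝔼.E (-ξ), 𝔼.E ξ]` with `𝔼.E ((ξ - λ̂) η) = 0`. -/
theorem exists_centering_constant (𝔼 : SLE Ω) (ξ η : BM Ω) (h : Uncorrelated 𝔼 ξ η) :
    ∃ lam ∈ Set.Icc (-𝔼.E (-ξ)) (𝔼.E ξ), 𝔼.E (mulBM (ξ - constBM Ω lam) η) = 0 := by
  obtain ⟨La, hLa, hLaval⟩ := exists_dominated_eq 𝔼 (-ξ)
  obtain ⟨Lb, hLb, hLbval⟩ := exists_dominated_eq 𝔼 ξ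
  have hLaξ : La ξ = -𝔼.E (-ξ) := by rw [← hLaval, map_neg]; ring
  have hbound : ∀ L : BM Ω →ₗ[ℝ] ℝ, Dominated 𝔼 L →
      -𝔼.E (-ξ) ≤ L ξ ∧ L ξ ≤ 𝔼.E ξ := by
    intro L hL
    refine ⟨?_, hL ξ⟩
    have := hL (-ξ)
    rw [map_neg] at this
    linarith
  have hab : -𝔼.E (-ξ) ≤ 𝔼.E ξ := hLaξ ▸ (hbound La hLa).2
  by_cases hcase : ∀ L : BM Ω →ₗ[ℝ] ℝ, Dominated 𝔼 L → L ξ = 𝔼.E ξ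
  · refine ⟨𝔼.E ξ, ⟨hab, le_rfl⟩, key_criterion 𝔼 h _ ?_ ⟨Lb, hLb, hLbval⟩⟩
    intro L hL
    rw [hcase L hL, sub_self, zero_mul]
  · push_neg at hcase
    obtain ⟨L1, hL1, hL1ne⟩ := hcase
    by_cases hsign : 0 ≤ Lb η
    · refine ⟨𝔼.E ξ, ⟨hab, le_rfl⟩, key_criterion 𝔼 h _ ?_ ⟨Lb, hLb, hLbval⟩⟩
      intro L hL
      have hp := pairwise_product_zero 𝔼 h hL hLb
      rw [hLbval] at hp
      rcases mul_eq_zero.mp hp with h1 | h2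
      · rw [h1, zero_mul]
      · have h2' : L η = Lb η := by linarith [sub_eq_zero.mp h2]
        have := (hbound L hL).2
        nlinarith
    · push_neg at hsign
      have haltb : -𝔼.E (-ξ) < 𝔼.E ξ := by
        have h1 := (hbound L1 hL1).1
        have h2 := lt_of_le_of_ne (hbound L1 hL1).2 hL1ne
        linarith
      have hLaη : La η = Lb η := by
        have hp := pairwise_product_zero 𝔼 h hLa hLb
        rw [hLaξ, hLbval] at hp
        rcases mul_eq_zero.mp hp with h1 | h2
        · exfalso; have := sub_eq_zero.mp h1; linarith
        · linarith [sub_eq_zero.mp h2]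
      refine ⟨-𝔼.E (-ξ), ⟨le_rfl, hab⟩, key_criterion 𝔼 h _ ?_ ⟨La, hLa, hLaξ⟩⟩
      intro L hL
      have hp := pairwise_product_zero 𝔼 h hL hLa
      rw [hLaξ] at hp
      rcases mul_eq_zero.mp hp with h1 | h2
      · rw [h1, zero_mul]
      · have h2' : L η = La η := by linarith [sub_eq_zero.mp h2]
        have := (hbound L hL).1
        rw [h2', hLaη]
        nlinarith
end

section
/- Extended Ottaviani inequality: Let E be a sublinear expectation on the space X of bounded measurable real-valued functions on (Ω, F), with upper capacity C(A) := E(1_A) and lower capacity c(A) := −E(−1_A). Let {ξ_n}_{n≥1} ⊂ X be an independent sequence with respect to E, let n ∈ ℕ, and let r, s, t > 0 be such that c({ |Σ_{i=k+1}^{n} ξ_i| ≤ s }) ≥ r for all 0 ≤ k ≤ n−1. Set S_k := Σ_{i=1}^{k} ξ_i and A_k := { ω : max_{1≤i≤k−1} |S_i(ω)| ≤ s+t and |S_k(ω)| > s+t }. Then C({ max_{1≤k≤n} |S_k| > s+t }) ≤ C({ |S_n| > t }) + (1 − r) Σ_{k=1}^{n} C(A_k). -/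
open MeasureTheory Set Filter Topology Classical

variable {Ω : Type*} [MeasurableSpace Ω]

section OttavianiHelpers

variable {Ω : Type*} [MeasurableSpace Ω]

lemma SLE.E_const' (𝔼 : SLE Ω) (c : ℝ) : 𝔼.E (constBM Ω c) = c := 𝔼.const_preserve c _

lemma SLE.E_mono' (𝔼 : SLE Ω) {ξ η : BM Ω} (h : ∀ ω, (ξ : Ω → ℝ) ω ≤ (η : Ω → ℝ) ω) :
    𝔼.E ξ ≤ 𝔼.E η := 𝔼.mono η ξ h

lemma SLE.cap_eq' (𝔼 : SLE Ω) {A : Set Ω} (hA : MeasurableSet A) :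
    𝔼.cap A = 𝔼.E (indBM A hA) := dif_pos hA

lemma SLE.lcap_eq' (𝔼 : SLE Ω) {A : Set Ω} (hA : MeasurableSet A) :
    𝔼.lcap A = -𝔼.E (-(indBM A hA)) := dif_pos hA

lemma SLE.cap_nonneg' (𝔼 : SLE Ω) {A : Set Ω} (hA : MeasurableSet A) : 0 ≤ 𝔼.cap A := by
  rw [𝔼.cap_eq' hA]
  have h := 𝔼.E_mono' (ξ := constBM Ω 0) (η := indBM A hA) (fun ω => by
    by_cases hω : ω ∈ A <;> simp [constBM, indBM, Set.indicator_apply, hω])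
  simpa [𝔼.E_const'] using h

lemma SLE.cap_mono' (𝔼 : SLE Ω) {A B : Set Ω} (hA : MeasurableSet A) (hB : MeasurableSet B)
    (h : A ⊆ B) : 𝔼.cap A ≤ 𝔼.cap B := by
  rw [𝔼.cap_eq' hA, 𝔼.cap_eq' hB]
  refine 𝔼.E_mono' fun ω => ?_
  by_cases hω : ω ∈ A
  · simp [indBM, Set.indicator_apply, hω, h hω]
  · by_cases hω' : ω ∈ B <;> simp [indBM, Set.indicator_apply, hω, hω']

lemma SLE.cap_union_le' (𝔼 : SLE Ω) {A B : Set Ω} (hA : MeasurableSet A) (hB : MeasurableSet B) :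
    𝔼.cap (A ∪ B) ≤ 𝔼.cap A + 𝔼.cap B := by
  rw [𝔼.cap_eq' (hA.union hB), 𝔼.cap_eq' hA, 𝔼.cap_eq' hB]
  refine le_trans (𝔼.E_mono' (η := indBM A hA + indBM B hB) fun ω => ?_) (𝔼.subadd _ _)
  by_cases h1 : ω ∈ A <;> by_cases h2 : ω ∈ B <;>
    simp [indBM, Set.indicator_apply, h1, h2]

lemma SLE.cap_empty' (𝔼 : SLE Ω) : 𝔼.cap (∅ : Set Ω) = 0 := by
  rw [𝔼.cap_eq' MeasurableSet.empty]
  have heq : indBM (∅ : Set Ω) MeasurableSet.empty = constBM Ω 0 := by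
    apply Subtype.ext; funext ω; simp [indBM, constBM]
  rw [heq, 𝔼.E_const']

lemma SLE.cap_biUnion_le' (𝔼 : SLE Ω) (F : Finset ℕ) (T : ℕ → Set Ω)
    (hT : ∀ k, MeasurableSet (T k)) :
    𝔼.cap (⋃ k ∈ F, T k) ≤ ∑ k ∈ F, 𝔼.cap (T k) := by
  classical
  induction F using Finset.induction_on with
  | empty => simp [𝔼.cap_empty']
  | @insert a s ha ih =>
    rw [Finset.sum_insert ha, Finset.set_biUnion_insert]
    exact (𝔼.cap_union_le' (hT a) (Finset.measurableSet_biUnion s fun k _ => hT k)).trans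
      (add_le_add_right ih _)

lemma SLE.cap_compl_le' (𝔼 : SLE Ω) {A : Set Ω} (hA : MeasurableSet A) :
    𝔼.cap Aᶜ ≤ 1 - 𝔼.lcap A := by
  rw [𝔼.cap_eq' hA.compl, 𝔼.lcap_eq' hA]
  have heq : indBM Aᶜ hA.compl = constBM Ω 1 + (-(indBM A hA)) := by
    apply Subtype.ext; funext ω
    by_cases h : ω ∈ A <;> simp [indBM, constBM, Set.indicator_apply, h]
  rw [heq]
  have hsub := 𝔼.subadd (constBM Ω 1) (-(indBM A hA))
  rw [𝔼.E_const'] at hsub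
  linarith

lemma SLE.lcap_le_one' (𝔼 : SLE Ω) {A : Set Ω} (hA : MeasurableSet A) : 𝔼.lcap A ≤ 1 := by
  rw [𝔼.lcap_eq' hA]
  have h := 𝔼.E_mono' (ξ := constBM Ω (-1)) (η := -(indBM A hA)) (fun ω => by
    by_cases hω : ω ∈ A <;> simp [indBM, constBM, Set.indicator_apply, hω])
  rw [𝔼.E_const'] at h
  linarith

lemma measurable_xi_sigmaGen (ξ : ℕ → BM Ω) {a b i : ℕ} (h1 : a ≤ i) (h2 : i ≤ b) :
    Measurable[sigmaGen ξ a b] fun ω => (ξ i : Ω → ℝ) ω := by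
  rw [measurable_iff_comap_le]
  unfold sigmaGen
  exact le_iSup₂ (f := fun i (_ : i ∈ Set.Icc a b) =>
    MeasurableSpace.comap (fun ω => (ξ i : Ω → ℝ) ω) inferInstance) i ⟨h1, h2⟩

end OttavianiHelpers

/-- Extended Ottaviani inequality for independent sequences under a sublinear
expectation. -/
theorem extended_ottaviani (𝔼 : SLE Ω) (ξ : ℕ → BM Ω) (hind : IndepSeq 𝔼 ξ)
    (n : ℕ) (hn : 1 ≤ n) (r s t : ℝ) (hr : 0 < r) (hs : 0 < s) (ht : 0 < t)
    (hc : ∀ k, k < n →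
      r ≤ 𝔼.lcap {ω | |∑ i ∈ Finset.Icc (k + 1) n, (ξ i : Ω → ℝ) ω| ≤ s}) :
    𝔼.cap {ω | ∃ k, 1 ≤ k ∧ k ≤ n ∧ s + t < |∑ i ∈ Finset.Icc 1 k, (ξ i : Ω → ℝ) ω|} ≤
      𝔼.cap {ω | t < |∑ i ∈ Finset.Icc 1 n, (ξ i : Ω → ℝ) ω|} +
        (1 - r) * ∑ k ∈ Finset.Icc 1 n,
          𝔼.cap {ω |
            (∀ i, 1 ≤ i → i ≤ k - 1 → |∑ m ∈ Finset.Icc 1 i, (ξ m : Ω → ℝ) ω| ≤ s + t) ∧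
            s + t < |∑ m ∈ Finset.Icc 1 k, (ξ m : Ω → ℝ) ω|} := by
  classical
  set S : ℕ → Ω → ℝ := fun k ω => ∑ i ∈ Finset.Icc 1 k, (ξ i : Ω → ℝ) ω with hS
  set T : ℕ → Ω → ℝ := fun k ω => ∑ i ∈ Finset.Icc (k + 1) n, (ξ i : Ω → ℝ) ω with hT
  set A : ℕ → Set Ω := fun k =>
    {ω | (∀ i, 1 ≤ i → i ≤ k - 1 → |S i ω| ≤ s + t) ∧ s + t < |S k ω|} with hA
  set B : ℕ → Set Ω := fun k => {ω | s < |T k ω|} with hB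
  set D : Set Ω := {ω | t < |S n ω|} with hD
  set M : Set Ω := {ω | ∃ k, 1 ≤ k ∧ k ≤ n ∧ s + t < |S k ω|} with hM
  -- measurability
  have hSm : ∀ k, Measurable (S k) := fun k =>
    Finset.measurable_sum _ fun i _ => BM.measurable (ξ i)
  have hTm : ∀ k, Measurable (T k) := fun k =>
    Finset.measurable_sum _ fun i _ => BM.measurable (ξ i)
  have hAm : ∀ k, MeasurableSet (A k) := by
    intro k
    have h1 : MeasurableSet {ω | ∀ i, 1 ≤ i → i ≤ k - 1 → |S i ω| ≤ s + t} := by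
      have heq : {ω | ∀ i, 1 ≤ i → i ≤ k - 1 → |S i ω| ≤ s + t}
          = ⋂ i, ⋂ (_ : 1 ≤ i), ⋂ (_ : i ≤ k - 1), {ω | |S i ω| ≤ s + t} := by
        ext ω; simp
      rw [heq]
      exact MeasurableSet.iInter fun i => MeasurableSet.iInter fun _ =>
        MeasurableSet.iInter fun _ => measurableSet_le (hSm i).abs measurable_const
    exact h1.inter (measurableSet_lt measurable_const (hSm k).abs)
  have hBm : ∀ k, MeasurableSet (B k) := fun k =>
    measurableSet_lt measurable_const (hTm k).abs
  have hDm : MeasurableSet D := measurableSet_lt measurable_const (hSm n).abs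
  have hMeq : M = ⋃ k ∈ Finset.Icc 1 n, {ω | s + t < |S k ω|} := by
    ext ω
    simp only [hM, Set.mem_setOf_eq, Set.mem_iUnion, Finset.mem_Icc, exists_prop]
    constructor
    · rintro ⟨k, h1, h2, h3⟩; exact ⟨k, ⟨h1, h2⟩, h3⟩
    · rintro ⟨k, ⟨h1, h2⟩, h3⟩; exact ⟨k, h1, h2, h3⟩
  have hMm : MeasurableSet M := by
    rw [hMeq]
    exact Finset.measurableSet_biUnion _ fun k _ =>
      measurableSet_lt measurable_const (hSm k).abs
  -- sigmaGen measurability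
  have hA_sg : ∀ k, 1 ≤ k → MeasurableSet[sigmaGen ξ 1 k] (A k) := by
    intro k hk
    have hSm' : ∀ i, i ≤ k → Measurable[sigmaGen ξ 1 k] (S i) := fun i hik =>
      Finset.measurable_sum _ fun m hm =>
        measurable_xi_sigmaGen ξ (Finset.mem_Icc.mp hm).1 ((Finset.mem_Icc.mp hm).2.trans hik)
    have h1 : MeasurableSet[sigmaGen ξ 1 k] {ω | ∀ i, 1 ≤ i → i ≤ k - 1 → |S i ω| ≤ s + t} := by
      have heq : {ω | ∀ i, 1 ≤ i → i ≤ k - 1 → |S i ω| ≤ s + t}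
          = ⋂ i, ⋂ (_ : 1 ≤ i), ⋂ (_ : i ≤ k - 1), {ω | |S i ω| ≤ s + t} := by
        ext ω; simp
      rw [heq]
      exact MeasurableSet.iInter fun i => MeasurableSet.iInter fun _ =>
        MeasurableSet.iInter fun hik =>
          (measurable_abs.comp (hSm' i (by omega))) measurableSet_Iic
    exact MeasurableSet.inter h1
      ((measurable_abs.comp (hSm' k le_rfl)) measurableSet_Ioi)
  have hB_sg : ∀ k, MeasurableSet[sigmaGen ξ (k + 1) n] (B k) := by
    intro k
    have hTm' : Measurable[sigmaGen ξ (k + 1) n] (T k) :=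
      Finset.measurable_sum _ fun m hm =>
        measurable_xi_sigmaGen ξ (Finset.mem_Icc.mp hm).1 (Finset.mem_Icc.mp hm).2
    exact (measurable_abs.comp hTm') measurableSet_Ioi
  -- key inclusion
  have hincl : M ⊆ D ∪ ⋃ k ∈ Finset.Icc 1 n, (A k ∩ B k) := by
    intro ω hω
    have hex : ∃ j, 1 ≤ j ∧ j ≤ n ∧ s + t < |S j ω| := hω
    set k₀ := Nat.find hex with hk₀
    obtain ⟨h01, h0n, h0⟩ := Nat.find_spec hex
    have hAk : ω ∈ A k₀ := by
      refine ⟨fun i hi1 hik => ?_, h0⟩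
      by_contra hcon
      push_neg at hcon
      have hilt : i < k₀ := by omega
      exact Nat.find_min hex hilt ⟨hi1, by omega, hcon⟩
    by_cases hb : s < |T k₀ ω|
    · right
      exact Set.mem_biUnion (Finset.mem_Icc.mpr ⟨h01, h0n⟩) ⟨hAk, hb⟩
    · left
      push_neg at hb
      have hsplit : S n ω = S k₀ ω + T k₀ ω := by
        simp only [hS, hT]
        rw [show Finset.Icc 1 k₀ = Finset.Ioc 0 k₀ from Finset.Icc_add_one_left_eq_Ioc 0 k₀,
          show Finset.Icc (k₀ + 1) n = Finset.Ioc k₀ n from Finset.Icc_add_one_left_eq_Ioc k₀ n,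
          show Finset.Icc 1 n = Finset.Ioc 0 n from Finset.Icc_add_one_left_eq_Ioc 0 n]
        exact (Finset.sum_Ioc_consecutive _ (Nat.zero_le k₀) h0n).symm
      have habs : |S k₀ ω| ≤ |S n ω| + |T k₀ ω| := by
        have h4 : S k₀ ω = S n ω + -(T k₀ ω) := by rw [hsplit]; ring
        rw [h4]
        exact (abs_add_le _ _).trans (by rw [abs_neg])
      show t < |S n ω|
      linarith
  -- 1 - r ≥ 0
  have hr1 : r ≤ 1 := by
    have h0 := hc 0 (by omega)
    exact h0.trans (𝔼.lcap_le_one' (measurableSet_le (hTm 0).abs measurable_const))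
  -- per-k bound
  have hkb : ∀ k ∈ Finset.Icc 1 n, 𝔼.cap (A k ∩ B k) ≤ (1 - r) * 𝔼.cap (A k) := by
    intro k hk
    obtain ⟨hk1, hkn⟩ := Finset.mem_Icc.mp hk
    rcases lt_or_eq_of_le hkn with hlt | hkeq
    · have hAB := hind.2 k n hk1 hlt (A k) (B k) (hA_sg k hk1) (hB_sg k)
      have hBle : 𝔼.cap (B k) ≤ 1 - r := by
        have hCset : MeasurableSet {ω | |T k ω| ≤ s} :=
          measurableSet_le (hTm k).abs measurable_const
        have hcomp : B k = {ω | |T k ω| ≤ s}ᶜ := by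
          ext ω
          simp only [hB, Set.mem_setOf_eq, Set.mem_compl_iff, not_le]
        have hle := 𝔼.cap_compl_le' hCset
        rw [← hcomp] at hle
        have hrk := hc k hlt
        linarith
      calc 𝔼.cap (A k ∩ B k) ≤ 𝔼.cap (A k) * 𝔼.cap (B k) := hAB
        _ ≤ 𝔼.cap (A k) * (1 - r) :=
            mul_le_mul_of_nonneg_left hBle (𝔼.cap_nonneg' (hAm k))
        _ = (1 - r) * 𝔼.cap (A k) := mul_comm _ _
    · subst hkeq
      have hBe : A k ∩ B k = ∅ := by
        ext ω
        simp only [hB, hT, Set.mem_inter_iff, Set.mem_setOf_eq, Set.mem_empty_iff_false,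
          iff_false, not_and]
        intro _
        rw [Finset.Icc_eq_empty (by omega)]
        simpa using hs.le
      rw [hBe, 𝔼.cap_empty']
      exact mul_nonneg (by linarith) (𝔼.cap_nonneg' (hAm k))
  -- assembly
  have key : 𝔼.cap M ≤ 𝔼.cap D + (1 - r) * ∑ k ∈ Finset.Icc 1 n, 𝔼.cap (A k) := by
    calc 𝔼.cap M ≤ 𝔼.cap (D ∪ ⋃ k ∈ Finset.Icc 1 n, (A k ∩ B k)) :=
          𝔼.cap_mono' hMm (hDm.union (Finset.measurableSet_biUnion _ fun k _ =>
            (hAm k).inter (hBm k))) hincl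
      _ ≤ 𝔼.cap D + 𝔼.cap (⋃ k ∈ Finset.Icc 1 n, (A k ∩ B k)) :=
          𝔼.cap_union_le' hDm (Finset.measurableSet_biUnion _ fun k _ =>
            (hAm k).inter (hBm k))
      _ ≤ 𝔼.cap D + ∑ k ∈ Finset.Icc 1 n, 𝔼.cap (A k ∩ B k) :=
          add_le_add_right (𝔼.cap_biUnion_le' _ _ fun k => (hAm k).inter (hBm k)) _
      _ ≤ 𝔼.cap D + ∑ k ∈ Finset.Icc 1 n, (1 - r) * 𝔼.cap (A k) :=
          add_le_add_right (Finset.sum_le_sum hkb) _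
      _ = 𝔼.cap D + (1 - r) * ∑ k ∈ Finset.Icc 1 n, 𝔼.cap (A k) := by
          rw [Finset.mul_sum]
  exact key
end
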